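/- Suppose p_1 > 0, p_2 + p_3 > 0, p_2 − p_3 > 0, and p_1² − 2p_2 > 0, with τ ≥ 0. Then every complex root λ of λ² + p_1·λ + p_2 + p_3·e^{−λτ} = 0 has strictly negative real part. -/

import Mathlib

theorem abstract_delay_stability
    (p1 p2 p3 τ : ℝ)
    (hp1 : 0 < p1) (hsum : 0 < p2 + p3) (hdiff : 0 < p2 - p3)
    (hdisc : 0 < p1 ^ 2 - 2 * p2) (hτ : 0 ≤ τ) :
    ∀ lam : ℂ,
      lam ^ 2 + (p1 : ℂ) * lam + (p2 : ℂ) + (p3 : ℂ) * Complex.exp (-lam * (τ : ℂ)) = 0 →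
      lam.re < 0 := by
  intro lam heq
  by_contra hre
  push_neg at hre
  set x := lam.re with hx
  set y := lam.im with hy
  have hzero : lam ^ 2 + (p1 : ℂ) * lam + (p2 : ℂ)
      = -((p3 : ℂ) * Complex.exp (-lam * (τ : ℂ))) := by
    linear_combination heq
  have habs := congrArg (fun z : ℂ => ‖z‖) hzero
  have hrhs : ‖(-((p3 : ℂ) * Complex.exp (-lam * (τ : ℂ))))‖ ≤ |p3| := by
    rw [norm_neg, norm_mul, Complex.norm_real, Real.norm_eq_abs, Complex.norm_exp]
    have hre2 : (-lam * (τ : ℂ)).re = -(x * τ) := by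
      simp [Complex.mul_re, hx]
    rw [hre2]
    have : Real.exp (-(x * τ)) ≤ 1 := by
      rw [Real.exp_le_one_iff]
      nlinarith
    nlinarith [abs_nonneg p3]
  have hlhs : (‖(lam ^ 2 + (p1 : ℂ) * lam + (p2 : ℂ))‖) ^ 2
      = (x ^ 2 - y ^ 2 + p1 * x + p2) ^ 2 + (2 * x * y + p1 * y) ^ 2 := by
    rw [Complex.sq_norm, Complex.normSq_apply]
    simp [Complex.add_re, Complex.add_im, Complex.mul_re, Complex.mul_im, pow_two]
    ring
  have hkey : p2 ^ 2 ≤ (‖(lam ^ 2 + (p1 : ℂ) * lam + (p2 : ℂ))‖) ^ 2 := by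
    rw [hlhs]
    nlinarith [sq_nonneg y, sq_nonneg (x * y), mul_nonneg hre hp1.le, sq_nonneg x,
      mul_nonneg (mul_nonneg hre hre) hp1.le, sq_nonneg (y ^ 2),
      mul_nonneg (sq_nonneg y) (sq_nonneg x), mul_nonneg (sq_nonneg y) (mul_nonneg hre hp1.le)]
  have h1 : (‖(lam ^ 2 + (p1 : ℂ) * lam + (p2 : ℂ))‖) ^ 2 ≤ p3 ^ 2 := by
    have := habs
    rw [this]
    calc ‖(-((p3 : ℂ) * Complex.exp (-lam * (τ : ℂ))))‖ ^ 2
        ≤ |p3| ^ 2 := by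
          have h0 := norm_nonneg (-((p3 : ℂ) * Complex.exp (-lam * (τ : ℂ))))
          nlinarith
      _ = p3 ^ 2 := sq_abs p3
  nlinarith [abs_nonneg p3]
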